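/- Identification under Mele's meeting restriction, two-step version (footnote to Section 3.3): let Π = Π(ρ, F) be the transition matrix of the network formation game on S = (E → Bool), and suppose ρ e g = ρ e (flip e g) for all e ∈ E and g ∈ S. Then for every g ∈ S and e ∈ E, the two-step transition probabilities satisfy (Π²) g (flip e g) / (Π²) (flip e g) g = F g e / (1 − F g e); hence marginal utilities are identified from the two-step transition matrix when τ₀ = 2. -/
import Mathlib

open Matrix Finset Filter

/-- Flip the link `e` in network `g`. -/
def flipL {E : Type*} [DecidableEq E] (e : E) (g : E → Bool) : E → Bool :=
  Function.update g e (!(g e))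

/-- The one-step transition matrix of the network formation game. -/
noncomputable def netPi {E : Type*} [DecidableEq E] [Fintype E]
    (ρ : E → (E → Bool) → ℝ) (F : (E → Bool) → E → ℝ) :
    Matrix (E → Bool) (E → Bool) ℝ :=
  Matrix.of fun g w =>
    if g = w then ∑ e, ρ e g * (1 - F g e)
    else ∑ e, if w = flipL e g then ρ e g * F g e else 0

/-- A meeting function: strictly positive selection probabilities summing to one. -/
def IsMeeting {E : Type*} [Fintype E] (ρ : E → (E → Bool) → ℝ) : Prop :=
  (∀ e g, 0 < ρ e g) ∧ ∀ g, ∑ e, ρ e g = 1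

/-- An acceptance function: probabilities strictly between 0 and 1, complementary under flips. -/
def IsAcceptance {E : Type*} [DecidableEq E] (F : (E → Bool) → E → ℝ) : Prop :=
  (∀ g e, 0 < F g e ∧ F g e < 1) ∧ ∀ g e, F g e + F (flipL e g) e = 1

section helpers
variable {E : Type*} [DecidableEq E]

lemma flipL_apply_self (e : E) (g : E → Bool) : flipL e g e = !(g e) :=
  Function.update_self _ _ _

lemma flipL_apply_ne {a e : E} (h : a ≠ e) (g : E → Bool) : flipL e g a = g a :=
  Function.update_of_ne h _ _

lemma flipL_flipL (e : E) (g : E → Bool) : flipL e (flipL e g) = g := by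
  funext a
  by_cases h : a = e
  · subst h; simp [flipL_apply_self]
  · simp [flipL_apply_ne h]

lemma flipL_ne (e : E) (g : E → Bool) : flipL e g ≠ g := by
  intro h
  have := congrFun h e
  simp [flipL_apply_self] at this

lemma flipL_inj {a b : E} {g : E → Bool} (h : flipL a g = flipL b g) : a = b := by
  by_contra hab
  have := congrFun h a
  rw [flipL_apply_self, flipL_apply_ne hab] at this
  simp at this

lemma flipL_two_ne {e e' e'' : E} {g : E → Bool} (h : e' ≠ e) :
    flipL e'' (flipL e' g) ≠ flipL e g := by
  intro hc
  by_cases h2 : e'' = e'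
  · subst h2
    rw [flipL_flipL] at hc
    exact flipL_ne e g hc.symm
  · have := congrFun hc e'
    rw [flipL_apply_ne (Ne.symm h2), flipL_apply_self, flipL_apply_ne h] at this
    simp at this

variable [Fintype E] (ρ : E → (E → Bool) → ℝ) (F : (E → Bool) → E → ℝ)

lemma netPi_self (g : E → Bool) : netPi ρ F g g = ∑ e, ρ e g * (1 - F g e) := by
  simp [netPi]

lemma netPi_flip (g : E → Bool) (e : E) : netPi ρ F g (flipL e g) = ρ e g * F g e := by
  rw [netPi, Matrix.of_apply, if_neg (fun h => flipL_ne e g h.symm)]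
  rw [Finset.sum_eq_single e]
  · simp
  · intro b _ hb
    rw [if_neg (fun h => hb (flipL_inj h.symm))]
  · intro h; exact absurd (Finset.mem_univ e) h

lemma netPi_zero {g w : E → Bool} (h1 : g ≠ w) (h2 : ∀ e, w ≠ flipL e g) :
    netPi ρ F g w = 0 := by
  rw [netPi, Matrix.of_apply, if_neg h1]
  exact Finset.sum_eq_zero fun e _ => if_neg (h2 e)

end helpers

/-- Identification under Mele's meeting restriction, two-step version (footnote to
Section 3.3): the ratio of two-step transition probabilities identifies the
acceptance odds, hence marginal utilities are identified when `τ₀ = 2`. -/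
theorem mele_identification_two_step {E : Type*} [DecidableEq E] [Fintype E] [Nonempty E]
    (ρ : E → (E → Bool) → ℝ) (F : (E → Bool) → E → ℝ)
    (hρ : IsMeeting ρ) (hF : IsAcceptance F)
    (hmele : ∀ (e : E) (g : E → Bool), ρ e g = ρ e (flipL e g)) :
    ∀ (g : E → Bool) (e : E),
      (netPi ρ F ^ 2) g (flipL e g) / (netPi ρ F ^ 2) (flipL e g) g
        = F g e / (1 - F g e) := by
  -- key: two-step probability between adjacent networks
  have key : ∀ (g : E → Bool) (e : E),
      (netPi ρ F ^ 2) g (flipL e g)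
        = ρ e g * F g e * (netPi ρ F g g + netPi ρ F (flipL e g) (flipL e g)) := by
    intro g e
    rw [pow_two, Matrix.mul_apply]
    have hzero : ∀ w, w ≠ g → w ≠ flipL e g →
        netPi ρ F g w * netPi ρ F w (flipL e g) = 0 := by
      intro w hw1 hw2
      by_cases hw : ∀ e', w ≠ flipL e' g
      · rw [netPi_zero ρ F (Ne.symm hw1) hw, zero_mul]
      · push_neg at hw
        obtain ⟨e', he'⟩ := hw
        subst he'
        have he'e : e' ≠ e := fun h => hw2 (by rw [h])
        have hz : netPi ρ F (flipL e' g) (flipL e g) = 0 :=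
          netPi_zero ρ F hw2 (fun e'' => Ne.symm (flipL_two_ne he'e))
        rw [hz, mul_zero]
    have hpair : ({g, flipL e g} : Finset (E → Bool)) ⊆ Finset.univ :=
      Finset.subset_univ _
    rw [← Finset.sum_subset hpair (fun w _ hw => by
      simp only [Finset.mem_insert, Finset.mem_singleton, not_or] at hw
      exact hzero w hw.1 hw.2)]
    rw [Finset.sum_pair (Ne.symm (flipL_ne e g))]
    rw [netPi_flip]
    ring
  intro g e
  have h1 := key g e
  have h2 := key (flipL e g) e
  rw [flipL_flipL] at h2
  set D := netPi ρ F g g + netPi ρ F (flipL e g) (flipL e g) with hD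
  have hDcomm : netPi ρ F (flipL e g) (flipL e g) + netPi ρ F g g = D := by
    rw [hD]; ring
  rw [hDcomm] at h2
  have hρeq : ρ e (flipL e g) = ρ e g := (hmele e g).symm
  have hFeq : F (flipL e g) e = 1 - F g e := by
    have := hF.2 g e; linarith
  rw [hρeq, hFeq] at h2
  rw [h1, h2]
  -- positivity of D
  have hDpos : 0 < D := by
    have : 0 < netPi ρ F g g := by
      rw [netPi_self]
      apply Finset.sum_pos
      · intro i _
        exact mul_pos (hρ.1 i g) (by linarith [(hF.1 g i).2])
      · exact Finset.univ_nonempty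
    have h2' : 0 < netPi ρ F (flipL e g) (flipL e g) := by
      rw [netPi_self]
      apply Finset.sum_pos
      · intro i _
        exact mul_pos (hρ.1 i (flipL e g)) (by linarith [(hF.1 (flipL e g) i).2])
      · exact Finset.univ_nonempty
    rw [hD]; linarith
  have hρpos := hρ.1 e g
  rw [mul_comm (ρ e g * F g e) D, mul_comm (ρ e g * (1 - F g e)) D,
    ← mul_assoc, ← mul_assoc]
  exact mul_div_mul_left _ _ (by positivity)
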